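/- The maximum size of an orthogonal set of messages in a one-dimensional convex cellular network equals the number of messages selected by the left-to-right greedy orthogonal scheme; in particular, no orthogonal set (greedy or otherwise) is larger than the greedy one. -/
import Mathlib


/-- A one-dimensional convex cellular network: sources and destinations are
placed at (distinct) positions on the real line; `desired s d` means source `s`
has a desired message for destination `d`; `heard s d` means `d` can hear `s`
(nonzero channel).  The fields are the destination- and source-convexity
properties of the paper, plus non-degeneracy (desired implies heard). -/
structure IsConvexCellular {Src Dst : Type*} (posS : Src → ℝ) (posD : Dst → ℝ)
    (desired heard : Src → Dst → Prop) : Prop where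
  posS_inj : Function.Injective posS
  posD_inj : Function.Injective posD
  pos_ne : ∀ s d, posS s ≠ posD d
  desired_heard : ∀ s d, desired s d → heard s d
  /-- Destination convexity (a): a desired source on the left forces all closer
  sources on the left to be desired. -/
  destConvL : ∀ s1 s2 d, posS s1 < posS s2 → posS s2 < posD d → desired s1 d → desired s2 d
  /-- Destination convexity (b): right side. -/
  destConvR : ∀ s1 s2 d, posS s2 < posS s1 → posD d < posS s2 → desired s1 d → desired s2 d
  /-- Destination convexity (c): an unheard source on the left forces all farther
  sources on the left to be unheard. -/
  destHearL : ∀ s1 s2 d, posS s1 < posS s2 → posS s2 < posD d → ¬ heard s2 d → ¬ heard s1 d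
  /-- Destination convexity (d): right side. -/
  destHearR : ∀ s1 s2 d, posS s2 < posS s1 → posD d < posS s2 → ¬ heard s2 d → ¬ heard s1 d
  /-- Source convexity (a). -/
  srcConvL : ∀ d1 d2 s, posD d1 < posD d2 → posD d2 < posS s → desired s d1 → desired s d2
  /-- Source convexity (b). -/
  srcConvR : ∀ d1 d2 s, posD d2 < posD d1 → posS s < posD d2 → desired s d1 → desired s d2
  /-- Source convexity (c). -/
  srcHearL : ∀ d1 d2 s, posD d1 < posD d2 → posD d2 < posS s → ¬ heard s d2 → ¬ heard s d1
  /-- Source convexity (d). -/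
  srcHearR : ∀ d1 d2 s, posD d2 < posD d1 → posS s < posD d2 → ¬ heard s d2 → ¬ heard s d1

/-- A set of desired (source, destination) message pairs is orthogonal if the
sources are pairwise distinct, the destinations are pairwise distinct, and no
involved destination hears any involved source other than its own. -/
def IsOrthogonalSet {Src Dst : Type*} (desired heard : Src → Dst → Prop)
    (M : Set (Src × Dst)) : Prop :=
  (∀ m ∈ M, desired m.1 m.2) ∧
  ∀ m ∈ M, ∀ m' ∈ M, m ≠ m' → m.1 ≠ m'.1 ∧ m.2 ≠ m'.2 ∧ ¬ heard m'.1 m.2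

/-- Suppose the left-to-right greedy orthogonal scheme selects the `n` messages
`σ 0 → δ 0, …, σ (n-1) → δ (n-1)` (starting from the leftmost source and
destination, each selection lexicographically minimal among messages orthogonal
to its predecessor, and no orthogonal message remaining at the end).  Then the
maximum cardinality of an orthogonal set of messages equals `n`, the number of
messages selected by the greedy scheme; in particular no orthogonal set,
greedy or otherwise, is larger than the greedy one. -/
theorem stmt11 {Src Dst : Type*} (posS : Src → ℝ) (posD : Dst → ℝ)
    (desired heard : Src → Dst → Prop)
    (h : IsConvexCellular posS posD desired heard)
    (n : ℕ) (hn : 0 < n) (σ : Fin n → Src) (δ : Fin n → Dst)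
    (hmonoS : StrictMono fun k => posS (σ k))
    (hmonoD : StrictMono fun k => posD (δ k))
    (hdes : ∀ k, desired (σ k) (δ k))
    (hleftS : ∀ s, posS (σ ⟨0, hn⟩) ≤ posS s)
    (hleftD : ∀ d, posD (δ ⟨0, hn⟩) ≤ posD d)
    (horth : ∀ (k : Fin n) (hk : (k : ℕ) + 1 < n),
      ¬ heard (σ ⟨(k : ℕ) + 1, hk⟩) (δ k) ∧ ¬ heard (σ k) (δ ⟨(k : ℕ) + 1, hk⟩))
    (hmin : ∀ (k : Fin n) (hk : (k : ℕ) + 1 < n) (S : Src) (D : Dst),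
      desired S D → posS (σ k) ≤ posS S → posD (δ k) ≤ posD D →
      ¬ heard S (δ k) → ¬ heard (σ k) D →
      posS (σ ⟨(k : ℕ) + 1, hk⟩) < posS S ∨
        (posS (σ ⟨(k : ℕ) + 1, hk⟩) = posS S ∧ posD (δ ⟨(k : ℕ) + 1, hk⟩) ≤ posD D))
    (hterm : ∀ (S : Src) (D : Dst),
      desired S D → posS (σ ⟨n - 1, by omega⟩) ≤ posS S →
      posD (δ ⟨n - 1, by omega⟩) ≤ posD D →
      ¬ heard S (δ ⟨n - 1, by omega⟩) → ¬ heard (σ ⟨n - 1, by omega⟩) D → False) :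
    IsGreatest {m : ℕ | ∃ O : Set (Src × Dst),
      IsOrthogonalSet desired heard O ∧ O.ncard = m} n := by
  
  classical
  obtain ⟨posS_inj, posD_inj, pos_ne, des_heard, destConvL, destConvR, destHearL, destHearR,
    srcConvL, srcConvR, srcHearL, srcHearR⟩ := h
  have hσinj : Function.Injective σ := fun a b hab => hmonoS.injective (by simp only [hab])
  have hδinj : Function.Injective δ := fun a b hab => hmonoD.injective (by simp only [hab])
  -- interleaving of greedy positions
  have interS : ∀ (k : Fin n) (hk : (k : ℕ) + 1 < n),
      posD (δ k) < posS (σ ⟨(k : ℕ) + 1, hk⟩) := by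
    intro k hk
    rcases lt_or_gt_of_ne (pos_ne (σ ⟨(k : ℕ) + 1, hk⟩) (δ k)) with hlt | hgt
    · exact absurd (des_heard _ _ (hdes k))
        (destHearL (σ k) (σ ⟨(k : ℕ) + 1, hk⟩) (δ k)
          (hmonoS (Fin.lt_def.mpr (Nat.lt_succ_self _))) hlt (horth k hk).1)
    · exact hgt
  have interD : ∀ (k : Fin n) (hk : (k : ℕ) + 1 < n),
      posS (σ k) < posD (δ ⟨(k : ℕ) + 1, hk⟩) := by
    intro k hk
    rcases lt_or_gt_of_ne (pos_ne (σ k) (δ ⟨(k : ℕ) + 1, hk⟩)) with hlt | hgt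
    · exact hlt
    · exact absurd (des_heard _ _ (hdes k))
        (srcHearL (δ k) (δ ⟨(k : ℕ) + 1, hk⟩) (σ k)
          (hmonoD (Fin.lt_def.mpr (Nat.lt_succ_self _))) hgt (horth k hk).2)
  -- pairwise non-hearing of greedy selections
  have noheard : ∀ j k : Fin n, j ≠ k → ¬ heard (σ j) (δ k) := by
    intro j k hjk
    rcases lt_or_gt_of_ne hjk with hlt | hgt
    · have hj1 : (j : ℕ) + 1 < n := by
        have h1 := k.2; have h2 := Fin.lt_def.mp hlt; omega
      have h1 : ¬ heard (σ j) (δ ⟨(j : ℕ) + 1, hj1⟩) := (horth j hj1).2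
      rcases eq_or_lt_of_le
          (show (⟨(j : ℕ) + 1, hj1⟩ : Fin n) ≤ k from
            Fin.le_def.mpr (Nat.succ_le_of_lt (Fin.lt_def.mp hlt))) with heq | hlt2
      · rw [← heq]; exact h1
      · exact srcHearR (δ k) (δ ⟨(j : ℕ) + 1, hj1⟩) (σ j) (hmonoD hlt2) (interD j hj1) h1
    · have hk1 : (k : ℕ) + 1 < n := by
        have h1 := j.2; have h2 := Fin.lt_def.mp hgt; omega
      have h1 : ¬ heard (σ ⟨(k : ℕ) + 1, hk1⟩) (δ k) := (horth k hk1).1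
      rcases eq_or_lt_of_le
          (show (⟨(k : ℕ) + 1, hk1⟩ : Fin n) ≤ j from
            Fin.le_def.mpr (Nat.succ_le_of_lt (Fin.lt_def.mp hgt))) with heq | hlt2
      · rw [← heq]; exact h1
      · exact destHearR (σ j) (σ ⟨(k : ℕ) + 1, hk1⟩) (δ k) (hmonoS hlt2) (interS k hk1) h1
  -- the cross lemma
  have cross : ∀ (s0 s1 : Src) (d0 d1 : Dst), heard s1 d0 → heard s0 d1 →
      posS s0 ≤ posS s1 → posD d0 ≤ posD d1 → heard s1 d1 := by
    intro s0 s1 d0 d1 h10 h01 hs hd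
    rcases eq_or_lt_of_le hs with heqs | hlts
    · rwa [posS_inj heqs] at h01
    rcases eq_or_lt_of_le hd with heqd | hltd
    · rwa [posD_inj heqd] at h10
    by_contra hno
    rcases lt_or_gt_of_ne (pos_ne s1 d1) with hlt | hgt
    · exact destHearL s0 s1 d1 hlts hlt hno h01
    · exact srcHearL d0 d1 s1 hltd hgt hno h10
  constructor
  · -- the greedy set witnesses n
    refine ⟨Set.range (fun k => (σ k, δ k)), ⟨?_, ?_⟩, ?_⟩
    · rintro m ⟨j, rfl⟩; exact hdes j
    · rintro m ⟨j, rfl⟩ m' ⟨k, rfl⟩ hne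
      have hjk : j ≠ k := fun e => hne (by rw [e])
      exact ⟨fun e => hjk (hσinj e), fun e => hjk (hδinj e), noheard k j (Ne.symm hjk)⟩
    · have hinj : Function.Injective (fun k : Fin n => (σ k, δ k)) :=
        fun a b hab => hσinj (congrArg Prod.fst hab)
      calc (Set.range fun k => (σ k, δ k)).ncard
          = ((fun k => (σ k, δ k)) '' Set.univ).ncard := by rw [Set.image_univ]
        _ = (Set.univ : Set (Fin n)).ncard := Set.ncard_image_of_injective _ hinj
        _ = n := by rw [Set.ncard_univ, Nat.card_eq_fintype_card, Fintype.card_fin]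
  · -- upper bound
    rintro m ⟨O, ⟨hdesO, horthO⟩, rfl⟩
    set P : Src × Dst → ℕ → Prop := fun m k =>
      ∃ hk : k < n, posS (σ ⟨k, hk⟩) ≤ posS m.1 ∧ posD (δ ⟨k, hk⟩) ≤ posD m.2 with hP
    have hfn : ∀ m : Src × Dst, Nat.findGreatest (P m) (n - 1) < n :=
      fun m => lt_of_le_of_lt (Nat.findGreatest_le _) (by omega)
    set f : Src × Dst → Fin n := fun m => ⟨Nat.findGreatest (P m) (n - 1), hfn m⟩ with hf
    have hspec : ∀ m : Src × Dst, posS (σ (f m)) ≤ posS m.1 ∧ posD (δ (f m)) ≤ posD m.2 := by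
      intro m
      have h0 : P m 0 := ⟨hn, hleftS m.1, hleftD m.2⟩
      obtain ⟨hk, h1, h2⟩ := Nat.findGreatest_spec (Nat.zero_le (n - 1)) h0
      exact ⟨h1, h2⟩
    have hmax : ∀ m : Src × Dst, ¬ P m ((f m : ℕ) + 1) := by
      intro m hPm
      obtain ⟨hk, h1', h2'⟩ := hPm
      by_cases hle : (f m : ℕ) + 1 ≤ n - 1
      · exact Nat.findGreatest_is_greatest (Nat.lt_succ_self _) hle ⟨hk, h1', h2'⟩
      · omega
    have hgood : ∀ m ∈ O, heard m.1 (δ (f m)) ∨ heard (σ (f m)) m.2 := by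
      intro m hm
      by_contra hbad
      push_neg at hbad
      obtain ⟨hb1, hb2⟩ := hbad
      obtain ⟨hσle, hδle⟩ := hspec m
      have hdm := hdesO m hm
      by_cases hk1 : ((f m : ℕ) + 1) < n
      · rcases hmin (f m) hk1 m.1 m.2 hdm hσle hδle hb1 hb2 with hlt | ⟨heq, hle⟩
        · have hD : posD m.2 < posD (δ ⟨(f m : ℕ) + 1, hk1⟩) := by
            by_contra hD
            exact hmax m ⟨hk1, le_of_lt hlt, le_of_not_gt hD⟩
          have hdes' : desired (σ ⟨(f m : ℕ) + 1, hk1⟩) m.2 := by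
            rcases lt_or_gt_of_ne (pos_ne (σ ⟨(f m : ℕ) + 1, hk1⟩) m.2) with h1 | h1
            · exact srcConvR (δ ⟨(f m : ℕ) + 1, hk1⟩) m.2 (σ ⟨(f m : ℕ) + 1, hk1⟩) hD h1
                (hdes ⟨(f m : ℕ) + 1, hk1⟩)
            · exact destConvR m.1 (σ ⟨(f m : ℕ) + 1, hk1⟩) m.2 hlt h1 hdm
          rcases hmin (f m) hk1 (σ ⟨(f m : ℕ) + 1, hk1⟩) m.2 hdes'
              (le_of_lt (hmonoS (Fin.lt_def.mpr (Nat.lt_succ_self _)))) hδle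
              (horth (f m) hk1).1 hb2 with h2 | ⟨_, h2⟩
          · exact lt_irrefl _ h2
          · exact absurd h2 (not_le_of_gt hD)
        · exact hmax m ⟨hk1, le_of_eq heq, hle⟩
      · have hkeq : f m = ⟨n - 1, by omega⟩ := Fin.ext (by simp only [Fin.val_mk]; have h2 := (f m).2; have h3 : (f m : ℕ) = Nat.findGreatest (P m) (n - 1) := rfl; omega)
        rw [hkeq] at hσle hδle hb1 hb2
        exact hterm m.1 m.2 hdm hσle hδle hb1 hb2
    have key : ∀ m ∈ O, ∀ m' ∈ O, f m = f m' → m = m' := by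
      intro m hm m' hm' hff
      by_contra hne
      obtain ⟨hS, hD, hh1⟩ := horthO m hm m' hm' hne
      obtain ⟨_, _, hh2⟩ := horthO m' hm' m hm (Ne.symm hne)
      obtain ⟨hσ1, hδ1⟩ := hspec m
      have hspec' := hspec m'
      rw [← hff] at hspec'
      obtain ⟨hσ2, hδ2⟩ := hspec'
      have hg2 := hgood m' hm'
      rw [← hff] at hg2
      have hSne : posS m.1 ≠ posS m'.1 := fun e => hS (posS_inj e)
      rcases hgood m hm with hp | hq <;> rcases hg2 with hp' | hq'
      · -- both heard by δ k
        have hSD' : posS m.1 < posD m'.2 := by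
          rcases eq_or_lt_of_le hδ2 with heq | hlt
          · exact absurd (posD_inj heq ▸ hp) hh2
          · rcases lt_or_gt_of_ne (pos_ne m.1 m'.2) with h1 | h1
            · exact h1
            · exact absurd hp (srcHearL (δ (f m)) m'.2 m.1 hlt h1 hh2)
        have hS'D : posS m'.1 < posD m.2 := by
          rcases eq_or_lt_of_le hδ1 with heq | hlt
          · exact absurd (posD_inj heq ▸ hp') hh1
          · rcases lt_or_gt_of_ne (pos_ne m'.1 m.2) with h1 | h1
            · exact h1
            · exact absurd hp' (srcHearL (δ (f m)) m.2 m'.1 hlt h1 hh1)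
        rcases lt_or_gt_of_ne hSne with h1 | h1
        · exact hh1 (des_heard _ _ (destConvL m.1 m'.1 m.2 h1 hS'D (hdesO m hm)))
        · exact hh2 (des_heard _ _ (destConvL m'.1 m.1 m'.2 h1 hSD' (hdesO m' hm')))
      · exact hh2 (cross (σ (f m)) m.1 (δ (f m)) m'.2 hp hq' hσ1 hδ2)
      · exact hh1 (cross (σ (f m)) m'.1 (δ (f m)) m.2 hp' hq hσ2 hδ1)
      · -- both hear σ k
        have hDS' : posD m.2 < posS m'.1 := by
          rcases eq_or_lt_of_le hσ2 with heq | hlt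
          · exact absurd (posS_inj heq ▸ hq) hh1
          · rcases lt_or_gt_of_ne (pos_ne m'.1 m.2) with h1 | h1
            · exact absurd hq (destHearL (σ (f m)) m'.1 m.2 hlt h1 hh1)
            · exact h1
        have hD'S : posD m'.2 < posS m.1 := by
          rcases eq_or_lt_of_le hσ1 with heq | hlt
          · exact absurd (posS_inj heq ▸ hq') hh2
          · rcases lt_or_gt_of_ne (pos_ne m.1 m'.2) with h1 | h1
            · exact absurd hq' (destHearL (σ (f m)) m.1 m'.2 hlt h1 hh2)
            · exact h1
        rcases lt_or_gt_of_ne hSne with h1 | h1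
        · exact hh2 (des_heard _ _ (destConvR m'.1 m.1 m'.2 h1 hD'S (hdesO m' hm')))
        · exact hh1 (des_heard _ _ (destConvR m.1 m'.1 m.2 h1 hDS' (hdesO m hm)))
    have hinj : Set.InjOn f O := fun a ha b hb hab => key a ha b hb hab
    calc O.ncard = (f '' O).ncard := (Set.ncard_image_of_injOn hinj).symm
      _ ≤ (Set.univ : Set (Fin n)).ncard :=
          Set.ncard_le_ncard (Set.subset_univ _) Set.finite_univ
      _ = n := by rw [Set.ncard_univ, Nat.card_eq_fintype_card, Fintype.card_fin]
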